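/- Let b, c₊, c₋ be real numbers with 0 ≤ b < c₊ ≤ c₋. Set ω₊ := √(c₊² − b²), ω₋ := √(c₋² − b²), 𝒯₊ := 2·W₊(b,c₊)/ω₊, and 𝒯₋ := 2·W₋(b,c₋)/ω₋. Let L > 0, let U, V : [0, L] → ℝ be continuous with |U(t)| ≤ 2b and c₊² ≤ V(t) ≤ c₋² for all t ∈ [0, L], and let ρ : [0, L] → ℝ be twice continuously differentiable with ρ''(t) + U(t)·ρ'(t) + V(t)·ρ(t) = 0 for all t ∈ [0, L], ρ(0) = 0, ρ'(0) > 0, ρ(τ) > 0 for all τ ∈ (0, L), and ρ(L) = 0. Then 𝒯₋ ≤ L ≤ 𝒯₊. Moreover, there exists a constant K > 0, depending only on b and c₊ (and not on U, V, L, or ρ), such that ρ(τ) ≤ K·ρ'(0) for all τ ∈ [0, L]. -/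

import Mathlib

open Real

open Real Set Filter Topology

/-- Auxiliary "inverse Prüfer time" function for the comparison argument. -/
lemma geodesic_aux_H (L : ℝ) (hL : 0 < L) (ρ ρ' ρ'' : ℝ → ℝ)
    (hρd : ∀ t ∈ Set.Icc 0 L, HasDerivWithinAt ρ (ρ' t) (Set.Icc 0 L) t)
    (hρ'd : ∀ t ∈ Set.Icc 0 L, HasDerivWithinAt ρ' (ρ'' t) (Set.Icc 0 L) t)
    (hρpos : ∀ t ∈ Set.Ioo 0 L, 0 < ρ t)
    (hρ0 : ρ 0 = 0) (hρL : ρ L = 0)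
    (hρ'0 : 0 < ρ' 0) (hρ'L : ρ' L < 0)
    (ω a : ℝ) (hω : 0 < ω) :
    ∃ H : ℝ → ℝ,
      H 0 = 0 ∧ H L = (π + 2 * Real.arctan (a / ω)) / ω ∧
      ContinuousOn H (Set.Icc 0 L) ∧
      (∀ t ∈ Set.Ioo 0 L, HasDerivAt H
        ((ρ' t ^ 2 - ρ t * ρ'' t) / (ω ^ 2 * ρ t ^ 2 + (|ρ' t| - a * ρ t) ^ 2)) t) ∧
      (∀ t ∈ Set.Ioo 0 L, 0 ≤ ρ' t → H t ≤ (π / 2 + Real.arctan (a / ω)) / ω) ∧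
      (∀ t ∈ Set.Ioo 0 L, ρ' t < 0 → (π / 2 + Real.arctan (a / ω)) / ω < H t) ∧
      (∀ t ∈ Set.Ioo 0 L, ρ' t = 0 → H t = (π / 2 + Real.arctan (a / ω)) / ω) := by
  have hω' : ω ≠ 0 := hω.ne'
  set A : ℝ := Real.arctan (a / ω) with hA
  set u : ℝ → ℝ := fun t => ρ' t / ρ t with hu_def
  set P₁ : ℝ → ℝ := fun t => π / (2 * ω) - ω⁻¹ * Real.arctan ((u t - a) / ω) with hP1_def
  set P₂ : ℝ → ℝ := fun t => (π / 2 + 2 * A) / ω - ω⁻¹ * Real.arctan ((u t + a) / ω) with hP2_def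
  set H : ℝ → ℝ := fun t =>
    if t ≤ 0 then 0 else if L ≤ t then (π + 2 * A) / ω
    else if 0 ≤ ρ' t then P₁ t else P₂ t with hH_def
  have hH0 : H 0 = 0 := by simp [hH_def]
  have hHL : H L = (π + 2 * A) / ω := by
    simp only [hH_def]
    rw [if_neg (by linarith), if_pos le_rfl]
  -- value of P₁ at points where ρ' t = 0
  have hP1val : ∀ t, ρ' t = 0 → P₁ t = (π / 2 + A) / ω := by
    intro t ht
    simp only [hP1_def, hu_def, ht, zero_div, zero_sub, neg_div, Real.arctan_neg]
    field_simp
    ring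
  have hP2val : ∀ t, ρ' t = 0 → P₂ t = (π / 2 + A) / ω := by
    intro t ht
    simp only [hP2_def, hu_def, ht, zero_div, zero_add]
    field_simp
    ring
  have hρcont : ContinuousOn ρ (Set.Icc 0 L) := fun t ht => (hρd t ht).continuousWithinAt
  have hρ'cont : ContinuousOn ρ' (Set.Icc 0 L) := fun t ht => (hρ'd t ht).continuousWithinAt
  -- branch identification
  have hHP1 : ∀ t ∈ Set.Ioo 0 L, 0 ≤ ρ' t → H t = P₁ t := by
    intro t ht h
    simp only [hH_def]
    rw [if_neg (not_le.2 ht.1), if_neg (not_le.2 ht.2), if_pos h]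
  have hHP2 : ∀ t ∈ Set.Ioo 0 L, ρ' t < 0 → H t = P₂ t := by
    intro t ht h
    simp only [hH_def]
    rw [if_neg (not_le.2 ht.1), if_neg (not_le.2 ht.2), if_neg (not_le.2 h)]
  -- derivatives of the two branches
  have hd1 : ∀ t₀ ∈ Set.Ioo 0 L, HasDerivAt P₁
      ((ρ' t₀ ^ 2 - ρ t₀ * ρ'' t₀) / (ω ^ 2 * ρ t₀ ^ 2 + (ρ' t₀ - a * ρ t₀) ^ 2)) t₀ := by
    intro t₀ ht₀
    have hρne : ρ t₀ ≠ 0 := (hρpos t₀ ht₀).ne'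
    have hρat : HasDerivAt ρ (ρ' t₀) t₀ :=
      (hρd t₀ (Set.mem_Icc_of_Ioo ht₀)).hasDerivAt (Icc_mem_nhds ht₀.1 ht₀.2)
    have hρ'at : HasDerivAt ρ' (ρ'' t₀) t₀ :=
      (hρ'd t₀ (Set.mem_Icc_of_Ioo ht₀)).hasDerivAt (Icc_mem_nhds ht₀.1 ht₀.2)
    have hu : HasDerivAt u ((ρ'' t₀ * ρ t₀ - ρ' t₀ * ρ' t₀) / ρ t₀ ^ 2) t₀ := hρ'at.div hρat hρne
    have h1 := (hu.sub_const a).div_const ω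
    have h2 := (Real.hasDerivAt_arctan ((u t₀ - a) / ω)).comp t₀ h1
    have h3 := (h2.const_mul ω⁻¹).const_sub (π / (2 * ω))
    refine h3.congr_deriv ?_
    have hpos : (0:ℝ) < ω ^ 2 * ρ t₀ ^ 2 + (ρ' t₀ - a * ρ t₀) ^ 2 := by positivity
    have h1x : (0:ℝ) < 1 + ((u t₀ - a) / ω) ^ 2 := by positivity
    simp only [hu_def]
    field_simp
    ring
  have hd2 : ∀ t₀ ∈ Set.Ioo 0 L, HasDerivAt P₂
      ((ρ' t₀ ^ 2 - ρ t₀ * ρ'' t₀) / (ω ^ 2 * ρ t₀ ^ 2 + (ρ' t₀ + a * ρ t₀) ^ 2)) t₀ := by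
    intro t₀ ht₀
    have hρne : ρ t₀ ≠ 0 := (hρpos t₀ ht₀).ne'
    have hρat : HasDerivAt ρ (ρ' t₀) t₀ :=
      (hρd t₀ (Set.mem_Icc_of_Ioo ht₀)).hasDerivAt (Icc_mem_nhds ht₀.1 ht₀.2)
    have hρ'at : HasDerivAt ρ' (ρ'' t₀) t₀ :=
      (hρ'd t₀ (Set.mem_Icc_of_Ioo ht₀)).hasDerivAt (Icc_mem_nhds ht₀.1 ht₀.2)
    have hu : HasDerivAt u ((ρ'' t₀ * ρ t₀ - ρ' t₀ * ρ' t₀) / ρ t₀ ^ 2) t₀ := hρ'at.div hρat hρne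
    have h1 := (hu.add_const a).div_const ω
    have h2 := (Real.hasDerivAt_arctan ((u t₀ + a) / ω)).comp t₀ h1
    have h3 := (h2.const_mul ω⁻¹).const_sub ((π / 2 + 2 * A) / ω)
    refine h3.congr_deriv ?_
    have hpos : (0:ℝ) < ω ^ 2 * ρ t₀ ^ 2 + (ρ' t₀ + a * ρ t₀) ^ 2 := by positivity
    have h1x : (0:ℝ) < 1 + ((u t₀ + a) / ω) ^ 2 := by positivity
    simp only [hu_def]
    field_simp
    ring
  -- the derivative of H on the interior
  have hHd : ∀ t ∈ Set.Ioo 0 L, HasDerivAt H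
      ((ρ' t ^ 2 - ρ t * ρ'' t) / (ω ^ 2 * ρ t ^ 2 + (|ρ' t| - a * ρ t) ^ 2)) t := by
    intro t₀ ht₀
    have hρ'at : HasDerivAt ρ' (ρ'' t₀) t₀ :=
      (hρ'd t₀ (Set.mem_Icc_of_Ioo ht₀)).hasDerivAt (Icc_mem_nhds ht₀.1 ht₀.2)
    rcases lt_trichotomy (ρ' t₀) 0 with hneg | hzero | hpos
    · have hev : ∀ᶠ t in 𝓝 t₀, ρ' t < 0 :=
        hρ'at.continuousAt.eventually (eventually_lt_nhds hneg)
      have hev2 : ∀ᶠ t in 𝓝 t₀, H t = P₂ t := by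
        filter_upwards [hev, Ioo_mem_nhds ht₀.1 ht₀.2] with t h1 h2
        exact hHP2 t h2 h1
      rw [abs_of_nonpos hneg.le]
      have := (hd2 t₀ ht₀).congr_of_eventuallyEq hev2
      refine this.congr_deriv ?_
      ring
    · -- junction: use union of the two closed half-regions
      have habs : |ρ' t₀| = ρ' t₀ := by rw [hzero, abs_zero]
      rw [habs]
      have h₁ : HasDerivWithinAt H
          ((ρ' t₀ ^ 2 - ρ t₀ * ρ'' t₀) / (ω ^ 2 * ρ t₀ ^ 2 + (ρ' t₀ - a * ρ t₀) ^ 2))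
          (Set.Ioo 0 L ∩ {t | 0 ≤ ρ' t}) t₀ := by
        refine ((hd1 t₀ ht₀).hasDerivWithinAt).congr (fun t ht => hHP1 t ht.1 ht.2) ?_
        exact hHP1 t₀ ht₀ hzero.ge
      have h₂ : HasDerivWithinAt H
          ((ρ' t₀ ^ 2 - ρ t₀ * ρ'' t₀) / (ω ^ 2 * ρ t₀ ^ 2 + (ρ' t₀ - a * ρ t₀) ^ 2))
          (Set.Ioo 0 L ∩ {t | ρ' t ≤ 0}) t₀ := by
        have heq : (ρ' t₀ ^ 2 - ρ t₀ * ρ'' t₀) / (ω ^ 2 * ρ t₀ ^ 2 + (ρ' t₀ - a * ρ t₀) ^ 2)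
            = (ρ' t₀ ^ 2 - ρ t₀ * ρ'' t₀) / (ω ^ 2 * ρ t₀ ^ 2 + (ρ' t₀ + a * ρ t₀) ^ 2) := by
          rw [hzero]; ring_nf
        rw [heq]
        refine ((hd2 t₀ ht₀).hasDerivWithinAt).congr ?_ ?_
        · intro t ht
          rcases eq_or_lt_of_le (show ρ' t ≤ 0 from ht.2) with h0 | h0
          · rw [hHP1 t ht.1 h0.ge, hP1val t h0, hP2val t h0]
          · exact hHP2 t ht.1 h0
        · rw [hHP1 t₀ ht₀ hzero.ge, hP1val t₀ hzero, hP2val t₀ hzero]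
      have := h₁.union h₂
      have hsub : Set.Ioo 0 L ⊆ (Set.Ioo 0 L ∩ {t | 0 ≤ ρ' t}) ∪ (Set.Ioo 0 L ∩ {t | ρ' t ≤ 0}) := by
        intro t ht
        rcases le_total 0 (ρ' t) with h | h
        · exact Or.inl ⟨ht, h⟩
        · exact Or.inr ⟨ht, h⟩
      exact ((this.mono hsub).hasDerivAt (Ioo_mem_nhds ht₀.1 ht₀.2))
    · have hev : ∀ᶠ t in 𝓝 t₀, 0 < ρ' t :=
        hρ'at.continuousAt.eventually (eventually_gt_nhds hpos)
      have hev2 : ∀ᶠ t in 𝓝 t₀, H t = P₁ t := by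
        filter_upwards [hev, Ioo_mem_nhds ht₀.1 ht₀.2] with t h1 h2
        exact hHP1 t h2 h1.le
      rw [abs_of_nonneg hpos.le]
      exact (hd1 t₀ ht₀).congr_of_eventuallyEq hev2
  -- continuity of H on [0, L]
  have hcont : ContinuousOn H (Set.Icc 0 L) := by
    intro t ht
    rcases eq_or_lt_of_le ht.1 with h0 | h0
    · -- t = 0
      subst h0
      rw [← continuousWithinAt_diff_self]
      have hl : Set.Icc (0:ℝ) L \ {0} ∈ 𝓝[Set.Icc 0 L \ {0}] (0:ℝ) := self_mem_nhdsWithin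
      have hIoo : ∀ᶠ s in 𝓝[Set.Icc 0 L \ {0}] (0:ℝ), s ∈ Set.Ioo 0 L := by
        have hlt : ∀ᶠ s in 𝓝[Set.Icc 0 L \ {0}] (0:ℝ), s < L :=
          eventually_nhdsWithin_of_eventually_nhds (eventually_lt_nhds hL)
        filter_upwards [hl, hlt] with s hs hsL
        exact ⟨lt_of_le_of_ne hs.1.1 (Ne.symm hs.2), hsL⟩
      have hρ'tend : Tendsto ρ' (𝓝[Set.Icc 0 L \ {0}] 0) (𝓝 (ρ' 0)) :=
        (hρ'cont 0 (Set.left_mem_Icc.2 hL.le)).mono_left (nhdsWithin_mono _ Set.diff_subset)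
      have hρ'ev : ∀ᶠ s in 𝓝[Set.Icc 0 L \ {0}] (0:ℝ), 0 < ρ' s :=
        hρ'tend.eventually (eventually_gt_nhds hρ'0)
      have hρtend : Tendsto ρ (𝓝[Set.Icc 0 L \ {0}] 0) (𝓝[>] 0) := by
        rw [tendsto_nhdsWithin_iff]
        constructor
        · have := (hρcont 0 (Set.left_mem_Icc.2 hL.le)).mono_left
            (nhdsWithin_mono _ (Set.diff_subset : Set.Icc 0 L \ {0} ⊆ Set.Icc 0 L))
          rwa [hρ0] at this
        · filter_upwards [hIoo] with s hs
          exact hρpos s hs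
      have hinv : Tendsto (fun s => (ρ s)⁻¹) (𝓝[Set.Icc 0 L \ {0}] 0) atTop :=
        tendsto_inv_nhdsGT_zero.comp hρtend
      have hutop : Tendsto u (𝓝[Set.Icc 0 L \ {0}] 0) atTop := by
        have := Filter.Tendsto.pos_mul_atTop hρ'0 hρ'tend hinv
        refine this.congr (fun s => ?_)
        simp [hu_def, div_eq_mul_inv]
      have harg : Tendsto (fun s => (u s - a) / ω) (𝓝[Set.Icc 0 L \ {0}] 0) atTop := by
        apply Filter.Tendsto.atTop_div_const hω
        simpa [sub_eq_add_neg] using tendsto_atTop_add_const_right _ (-a) hutop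
      have harctan : Tendsto (fun s => Real.arctan ((u s - a) / ω))
          (𝓝[Set.Icc 0 L \ {0}] 0) (𝓝 (π / 2)) :=
        (Real.tendsto_arctan_atTop.mono_right nhdsWithin_le_nhds).comp harg
      have hP1tend : Tendsto P₁ (𝓝[Set.Icc 0 L \ {0}] 0)
          (𝓝 (π / (2 * ω) - ω⁻¹ * (π / 2))) :=
        (harctan.const_mul ω⁻¹).const_sub (π / (2 * ω))
      have : Tendsto H (𝓝[Set.Icc 0 L \ {0}] 0) (𝓝 (π / (2 * ω) - ω⁻¹ * (π / 2))) := by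
        refine hP1tend.congr' ?_
        filter_upwards [hIoo, hρ'ev] with s h1 h2
        exact (hHP1 s h1 h2.le).symm
      have hval : π / (2 * ω) - ω⁻¹ * (π / 2) = 0 := by field_simp; ring
      rw [hval] at this
      rwa [ContinuousWithinAt, hH0]
    rcases eq_or_lt_of_le ht.2 with hL' | hL'
    · -- t = L
      subst hL'
      rw [← continuousWithinAt_diff_self]
      have hl : Set.Icc (0:ℝ) t \ {t} ∈ 𝓝[Set.Icc 0 t \ {t}] t := self_mem_nhdsWithin
      have hIoo : ∀ᶠ s in 𝓝[Set.Icc 0 t \ {t}] t, s ∈ Set.Ioo 0 t := by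
        have hgt : ∀ᶠ s in 𝓝[Set.Icc 0 t \ {t}] t, 0 < s :=
          eventually_nhdsWithin_of_eventually_nhds (eventually_gt_nhds hL)
        filter_upwards [hl, hgt] with s hs hs0
        exact ⟨hs0, lt_of_le_of_ne hs.1.2 hs.2⟩
      have hρ'tend : Tendsto ρ' (𝓝[Set.Icc 0 t \ {t}] t) (𝓝 (ρ' t)) :=
        (hρ'cont t (Set.right_mem_Icc.2 hL.le)).mono_left (nhdsWithin_mono _ Set.diff_subset)
      have hρ'ev : ∀ᶠ s in 𝓝[Set.Icc 0 t \ {t}] t, ρ' s < 0 :=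
        hρ'tend.eventually (eventually_lt_nhds hρ'L)
      have hρtend : Tendsto ρ (𝓝[Set.Icc 0 t \ {t}] t) (𝓝[>] 0) := by
        rw [tendsto_nhdsWithin_iff]
        constructor
        · have := (hρcont t (Set.right_mem_Icc.2 hL.le)).mono_left
            (nhdsWithin_mono _ (Set.diff_subset : Set.Icc 0 t \ {t} ⊆ Set.Icc 0 t))
          rwa [hρL] at this
        · filter_upwards [hIoo] with s hs
          exact hρpos s hs
      have hinv : Tendsto (fun s => (ρ s)⁻¹) (𝓝[Set.Icc 0 t \ {t}] t) atTop :=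
        tendsto_inv_nhdsGT_zero.comp hρtend
      have hubot : Tendsto u (𝓝[Set.Icc 0 t \ {t}] t) atBot := by
        have := Filter.Tendsto.neg_mul_atTop hρ'L hρ'tend hinv
        refine this.congr (fun s => ?_)
        simp [hu_def, div_eq_mul_inv]
      have harg : Tendsto (fun s => (u s + a) / ω) (𝓝[Set.Icc 0 t \ {t}] t) atBot := by
        apply Filter.Tendsto.atBot_div_const hω
        exact tendsto_atBot_add_const_right _ a hubot
      have harctan : Tendsto (fun s => Real.arctan ((u s + a) / ω))
          (𝓝[Set.Icc 0 t \ {t}] t) (𝓝 (-(π / 2))) :=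
        (Real.tendsto_arctan_atBot.mono_right nhdsWithin_le_nhds).comp harg
      have hP2tend : Tendsto P₂ (𝓝[Set.Icc 0 t \ {t}] t)
          (𝓝 ((π / 2 + 2 * A) / ω - ω⁻¹ * (-(π / 2)))) :=
        (harctan.const_mul ω⁻¹).const_sub ((π / 2 + 2 * A) / ω)
      have htend : Tendsto H (𝓝[Set.Icc 0 t \ {t}] t)
          (𝓝 ((π / 2 + 2 * A) / ω - ω⁻¹ * (-(π / 2)))) := by
        refine hP2tend.congr' ?_
        filter_upwards [hIoo, hρ'ev] with s h1 h2
        exact (hHP2 s h1 h2).symm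
      have hval : (π / 2 + 2 * A) / ω - ω⁻¹ * (-(π / 2)) = (π + 2 * A) / ω := by
        field_simp
        ring
      rw [hval] at htend
      rwa [ContinuousWithinAt, hHL]
    · exact (hHd t ⟨h0, hL'⟩).continuousAt.continuousWithinAt
  refine ⟨H, hH0, hHL, hcont, hHd, ?_, ?_, ?_⟩
  · intro t ht h
    rw [hHP1 t ht h]
    simp only [hP1_def]
    have hu0 : 0 ≤ u t := div_nonneg h (hρpos t ht).le
    have harc : -A ≤ Real.arctan ((u t - a) / ω) := by
      rw [hA, ← Real.arctan_neg, ← neg_div]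
      exact Real.arctan_strictMono.monotone ((div_le_div_iff_of_pos_right hω).2 (by linarith))
    have hmul := mul_le_mul_of_nonneg_left harc (inv_nonneg.2 hω.le)
    have heq : π / (2 * ω) - ω⁻¹ * (-A) = (π / 2 + A) / ω := by field_simp; ring
    linarith
  · intro t ht h
    rw [hHP2 t ht h]
    simp only [hP2_def]
    have hu0 : u t < 0 := div_neg_of_neg_of_pos h (hρpos t ht)
    have harc : Real.arctan ((u t + a) / ω) < A := by
      rw [hA]
      exact Real.arctan_strictMono ((div_lt_div_iff_of_pos_right hω).2 (by linarith))
    have hmul := mul_lt_mul_of_pos_left harc (inv_pos.2 hω)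
    have heq : (π / 2 + 2 * A) / ω - ω⁻¹ * A = (π / 2 + A) / ω := by field_simp; ring
    linarith
  · intro t ht h
    rw [hHP1 t ht h.ge, hP1val t h]

private lemma geo_arith_up (b cp ω U V x y z : ℝ) (hω : ω ^ 2 = cp ^ 2 - b ^ 2) (hx : 0 ≤ x)
    (hU : -(2 * b * (x * |y|)) ≤ U * x * y) (hV : cp ^ 2 ≤ V) (hz : z + U * y + V * x = 0) :
    ω ^ 2 * x ^ 2 + (|y| - b * x) ^ 2 ≤ y ^ 2 - x * z := by
  have h1 : cp ^ 2 * x ^ 2 ≤ V * x ^ 2 := mul_le_mul_of_nonneg_right hV (sq_nonneg x)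
  nlinarith [sq_abs y]

private lemma geo_arith_low (b cm ω U V x y z : ℝ) (hω : ω ^ 2 = cm ^ 2 - b ^ 2) (hx : 0 ≤ x)
    (hU : U * x * y ≤ 2 * b * (x * |y|)) (hV : V ≤ cm ^ 2) (hz : z + U * y + V * x = 0) :
    y ^ 2 - x * z ≤ ω ^ 2 * x ^ 2 + (|y| - -b * x) ^ 2 := by
  have h1 : V * x ^ 2 ≤ cm ^ 2 * x ^ 2 := mul_le_mul_of_nonneg_right hV (sq_nonneg x)
  nlinarith [sq_abs y]

private lemma geo_arith_energy (b cp U V x y z : ℝ) (hb : 0 ≤ b) (hx : 0 ≤ x) (hy : 0 ≤ y)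
    (hcp : 0 ≤ cp) (hU : |U| ≤ 2 * b) (hV : cp ^ 2 ≤ V) (hz : z + U * y + V * x = 0) :
    -(4 * b) * (cp ^ 2 * x ^ 2 + y ^ 2) + (cp ^ 2 * (2 * x * y) + 2 * y * z) ≤ 0 := by
  have h1 : 2 * x * y * cp ^ 2 ≤ 2 * x * y * V :=
    mul_le_mul_of_nonneg_left hV (by positivity)
  have h2 : -(2 * U * y ^ 2) ≤ 4 * b * y ^ 2 := by
    nlinarith [neg_abs_le U, sq_nonneg y]
  nlinarith [mul_nonneg (mul_nonneg hb (mul_nonneg hcp hcp)) (mul_nonneg hx hx)]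

private lemma geo_arith_sq (a c : ℝ) (ha : 0 ≤ a) (hc : 0 ≤ c) (h : a ^ 2 ≤ c ^ 2) : a ≤ c := by
  have := Real.sqrt_le_sqrt h
  rwa [Real.sqrt_sq ha, Real.sqrt_sq hc] at this

set_option maxHeartbeats 2000000 in

/-- ODE core of the geodesic return theorem: for a damped oscillator
`ρ'' + U·ρ' + V·ρ = 0` on `[0, L]` with `|U| ≤ 2b` and `c₊² ≤ V ≤ c₋²`, if `ρ`
starts at `0` with positive velocity, is positive on `(0, L)`, and returns to `0`
at time `L`, then `𝒯₋(b,c₋) = 2W₋(b,c₋)/ω₋ ≤ L ≤ 2W₊(b,c₊)/ω₊ = 𝒯₊(b,c₊)`;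
moreover there is a constant `K > 0` depending only on `b` and `c₊` (not on
`U, V, L, ρ`) with `ρ ≤ K·ρ'(0)` on `[0, L]`. -/
theorem geodesic_return_ode_core
    (b cp : ℝ) (hb : 0 ≤ b) (hbcp : b < cp)
    (Wp : ℝ) (hWp : Wp ∈ Set.Ico (π / 2) π) (hcosWp : Real.cos Wp = -(b / cp)) :
    ∃ K : ℝ, 0 < K ∧
      ∀ (cm : ℝ), cp ≤ cm →
      ∀ (Wm : ℝ), Wm ∈ Set.Ioc 0 (π / 2) → Real.cos Wm = b / cm →
      ∀ (L : ℝ) (U V ρ ρ' ρ'' : ℝ → ℝ),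
        0 < L →
        ContinuousOn U (Set.Icc 0 L) →
        ContinuousOn V (Set.Icc 0 L) →
        (∀ t ∈ Set.Icc 0 L, |U t| ≤ 2 * b) →
        (∀ t ∈ Set.Icc 0 L, cp ^ 2 ≤ V t ∧ V t ≤ cm ^ 2) →
        (∀ t ∈ Set.Icc 0 L, HasDerivWithinAt ρ (ρ' t) (Set.Icc 0 L) t) →
        (∀ t ∈ Set.Icc 0 L, HasDerivWithinAt ρ' (ρ'' t) (Set.Icc 0 L) t) →
        ContinuousOn ρ'' (Set.Icc 0 L) →
        (∀ t ∈ Set.Icc 0 L, ρ'' t + U t * ρ' t + V t * ρ t = 0) →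
        ρ 0 = 0 → 0 < ρ' 0 →
        (∀ τ ∈ Set.Ioo 0 L, 0 < ρ τ) → ρ L = 0 →
        (2 * Wm / Real.sqrt (cm ^ 2 - b ^ 2) ≤ L ∧
          L ≤ 2 * Wp / Real.sqrt (cp ^ 2 - b ^ 2) ∧
          ∀ τ ∈ Set.Icc 0 L, ρ τ ≤ K * ρ' 0) := by
  have hcp : 0 < cp := lt_of_le_of_lt hb hbcp
  set ωp := Real.sqrt (cp ^ 2 - b ^ 2) with hωp_def
  have hcb : (0:ℝ) < cp ^ 2 - b ^ 2 := by nlinarith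
  have hωp2 : ωp ^ 2 = cp ^ 2 - b ^ 2 := Real.sq_sqrt hcb.le
  have hωp : 0 < ωp := Real.sqrt_pos.2 hcb
  set β := Real.arctan (b / ωp) with hβ_def
  have hβ0 : 0 ≤ β := by
    rw [hβ_def, ← Real.arctan_zero]
    exact Real.arctan_strictMono.monotone (div_nonneg hb hωp.le)
  have hβlt : β < π / 2 := Real.arctan_lt_pi_div_two _
  have hsqrt_aux : ∀ c ω : ℝ, 0 < ω → 0 < c → ω ^ 2 + b ^ 2 = c ^ 2 →
      Real.sin (Real.arctan (b / ω)) = b / c := by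
    intro c ω hω hc hsum
    rw [Real.sin_arctan]
    have h1 : (1 + (b / ω) ^ 2) = (c / ω) ^ 2 := by
      field_simp
      linarith
    rw [h1, Real.sqrt_sq (by positivity)]
    field_simp
  have hWpeq : Wp = π / 2 + β := by
    have h1 : Real.cos (π / 2 + β) = -(b / cp) := by
      rw [show π / 2 + β = π / 2 - -β by ring, Real.cos_pi_div_two_sub, Real.sin_neg, hβ_def,
        hsqrt_aux cp ωp hωp hcp (by linarith)]
    have hπ : 0 < π := Real.pi_pos
    exact Real.injOn_cos ⟨by linarith [hWp.1], hWp.2.le⟩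
      ⟨by linarith, by linarith⟩ (by rw [hcosWp, h1])
  set Tp := 2 * Wp / ωp with hTp_def
  have hTppos : 0 < Tp := by
    rw [hTp_def]
    have : 0 < Wp := by linarith [hWp.1, Real.pi_pos]
    positivity
  refine ⟨Real.exp (2 * b * Tp) / cp, by positivity, ?_⟩
  intro cm hcm Wm hWm hcosWm L U V ρ ρ' ρ'' hL hUc hVc hUb hVb hρd hρ'd hρ''c hode hρ0 hρ'0
    hρpos hρL
  have hbcm : b < cm := lt_of_lt_of_le hbcp hcm
  have hcm0 : 0 < cm := lt_of_le_of_lt hb hbcm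
  set ωm := Real.sqrt (cm ^ 2 - b ^ 2) with hωm_def
  have hcbm : (0:ℝ) < cm ^ 2 - b ^ 2 := by nlinarith
  have hωm2 : ωm ^ 2 = cm ^ 2 - b ^ 2 := Real.sq_sqrt hcbm.le
  have hωm : 0 < ωm := Real.sqrt_pos.2 hcbm
  set γ := Real.arctan (b / ωm) with hγ_def
  have hγ0 : 0 ≤ γ := by
    rw [hγ_def, ← Real.arctan_zero]
    exact Real.arctan_strictMono.monotone (div_nonneg hb hωm.le)
  have hγlt : γ < π / 2 := Real.arctan_lt_pi_div_two _
  have hπ : 0 < π := Real.pi_pos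
  have hWmeq : Wm = π / 2 - γ := by
    have h1 : Real.cos (π / 2 - γ) = b / cm := by
      rw [Real.cos_pi_div_two_sub, hγ_def, hsqrt_aux cm ωm hωm hcm0 (by linarith)]
    exact Real.injOn_cos ⟨hWm.1.le, by linarith [hWm.2]⟩
      ⟨by linarith, by linarith⟩ (by rw [hcosWm, h1])
  -- basic continuity and positivity facts
  have hρcont : ContinuousOn ρ (Set.Icc 0 L) := fun t ht => (hρd t ht).continuousWithinAt
  have hρ'cont : ContinuousOn ρ' (Set.Icc 0 L) := fun t ht => (hρ'd t ht).continuousWithinAt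
  have hρnn : ∀ t ∈ Set.Icc 0 L, 0 ≤ ρ t := by
    intro t ht
    rcases eq_or_lt_of_le ht.1 with h | h
    · rw [← h, hρ0]
    rcases eq_or_lt_of_le ht.2 with h' | h'
    · rw [h', hρL]
    · exact (hρpos t ⟨h, h'⟩).le
  -- ρ' L ≤ 0
  have hρ'Lle : ρ' L ≤ 0 := by
    have hslope := hρd L (Set.right_mem_Icc.2 hL.le)
    rw [hasDerivWithinAt_iff_tendsto_slope] at hslope
    have hmono : 𝓝[Set.Ioo 0 L] L ≤ 𝓝[Set.Icc 0 L \ {L}] L := by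
      apply nhdsWithin_mono
      intro s hs
      exact ⟨⟨hs.1.le, hs.2.le⟩, hs.2.ne⟩
    have := hslope.mono_left hmono
    have hne : (𝓝[Set.Ioo 0 L] L).NeBot := by
      rw [nhdsWithin_Ioo_eq_nhdsLT hL]
      infer_instance
    refine le_of_tendsto this ?_
    filter_upwards [self_mem_nhdsWithin] with s hs
    have : slope ρ L s = ρ s / (s - L) := by
      rw [slope_def_field, hρL]
      ring_nf
    rw [this]
    apply div_nonpos_of_nonneg_of_nonpos (hρpos s hs).le
    linarith [hs.2]
  -- ρ' L ≠ 0 via uniqueness of the (reversed-time) linear ODE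
  have hρ'Lne : ρ' L ≠ 0 := by
    intro h0
    set Ub : ℝ → ℝ := fun t => U (max 0 (min t L)) with hUb_def
    set Vb : ℝ → ℝ := fun t => V (max 0 (min t L)) with hVb_def
    have hmemIcc : ∀ t : ℝ, max 0 (min t L) ∈ Set.Icc 0 L := by
      intro t
      exact ⟨le_max_left _ _, max_le hL.le (min_le_right _ _)⟩
    have hproj : ∀ t ∈ Set.Icc 0 L, max 0 (min t L) = t := by
      intro t ht
      rw [min_eq_left ht.2, max_eq_right ht.1]
    have hUbb : ∀ t, |Ub t| ≤ 2 * b := fun t => hUb _ (hmemIcc t)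
    have hVbb : ∀ t, |Vb t| ≤ cm ^ 2 := by
      intro t
      obtain ⟨h1, h2⟩ := hVb _ (hmemIcc t)
      rw [abs_le]
      exact ⟨by linarith [sq_nonneg cp, sq_nonneg cm], h2⟩
    set Kl : NNReal := ⟨1 + 2 * b + cm ^ 2, by positivity⟩ with hKl_def
    set v : ℝ → (ℝ × ℝ) → (ℝ × ℝ) := fun t x => (x.2, -(Ub t * x.2 + Vb t * x.1)) with hv_def
    have hlip : ∀ t, LipschitzOnWith Kl (v t) Set.univ := by
      intro t
      rw [lipschitzOnWith_iff_dist_le_mul]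
      intro x _ y _
      have hKl : (Kl : ℝ) = 1 + 2 * b + cm ^ 2 := rfl
      simp only [hv_def]
      rw [Prod.dist_eq, Prod.dist_eq, hKl]
      simp only [Real.dist_eq]
      set M := max |x.1 - y.1| |x.2 - y.2| with hM_def
      have hM1 : |x.1 - y.1| ≤ M := le_max_left _ _
      have hM2 : |x.2 - y.2| ≤ M := le_max_right _ _
      have hM0 : 0 ≤ M := le_trans (abs_nonneg _) hM1
      have hcmsq : (0:ℝ) ≤ cm ^ 2 := sq_nonneg cm
      apply max_le
      · exact le_trans hM2 (le_mul_of_one_le_left hM0 (by linarith))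
      · have heq : -(Ub t * x.2 + Vb t * x.1) - -(Ub t * y.2 + Vb t * y.1)
            = Ub t * (y.2 - x.2) + Vb t * (y.1 - x.1) := by ring
        rw [heq]
        calc |Ub t * (y.2 - x.2) + Vb t * (y.1 - x.1)|
            ≤ |Ub t * (y.2 - x.2)| + |Vb t * (y.1 - x.1)| := abs_add_le _ _
          _ = |Ub t| * |x.2 - y.2| + |Vb t| * |x.1 - y.1| := by
              rw [abs_mul, abs_mul, abs_sub_comm (y.2) (x.2), abs_sub_comm (y.1) (x.1)]
          _ ≤ 2 * b * M + cm ^ 2 * M := by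
              apply add_le_add
              · exact mul_le_mul (hUbb t) hM2 (abs_nonneg _) (by linarith)
              · exact mul_le_mul (hVbb t) hM1 (abs_nonneg _) hcmsq
          _ ≤ (1 + 2 * b + cm ^ 2) * M := by
              have hring : (1 + 2 * b + cm ^ 2) * M - (2 * b * M + cm ^ 2 * M) = M := by ring
              linarith
    set f : ℝ → ℝ × ℝ := fun t => (ρ t, ρ' t) with hf_def
    have hcontf : ContinuousOn f (Set.Icc 0 L) := hρcont.prodMk hρ'cont
    have hf' : ∀ t ∈ Set.Ioc 0 L, HasDerivWithinAt f (v t (f t)) (Set.Iic t) t := by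
      intro t ht
      have htIcc : t ∈ Set.Icc 0 L := ⟨ht.1.le, ht.2⟩
      have h1 : HasDerivWithinAt f (ρ' t, ρ'' t) (Set.Icc 0 L) t :=
        (hρd t htIcc).prodMk (hρ'd t htIcc)
      have hmemn : Set.Icc 0 L ∈ 𝓝[Set.Iic t] t := by
        have h0 : Set.Ioi (0:ℝ) ∈ 𝓝 t := Ioi_mem_nhds ht.1
        have h2 : Set.Ioi (0:ℝ) ∩ Set.Iic t ∈ 𝓝[Set.Iic t] t :=
          Filter.inter_mem (mem_nhdsWithin_of_mem_nhds h0) self_mem_nhdsWithin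
        exact Filter.mem_of_superset h2 (fun s hs => ⟨hs.1.le, le_trans hs.2 ht.2⟩)
      have h2 := h1.mono_of_mem_nhdsWithin hmemn
      have hval : v t (f t) = (ρ' t, ρ'' t) := by
        simp only [hv_def, hf_def]
        rw [hUb_def, hVb_def]
        simp only [hproj t htIcc]
        have h2' : ρ'' t = -(U t * ρ' t + V t * ρ t) := by linarith [hode t htIcc]
        rw [h2']
      rw [hval]
      exact h2
    have hg' : ∀ t ∈ Set.Ioc 0 L,
        HasDerivWithinAt (fun _ : ℝ => ((0:ℝ), (0:ℝ))) (v t ((0:ℝ), (0:ℝ))) (Set.Iic t) t := by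
      intro t ht
      have : v t ((0:ℝ), (0:ℝ)) = ((0:ℝ), (0:ℝ)) := by simp [hv_def]
      rw [this]
      exact hasDerivWithinAt_const _ _ _
    have heqL : f L = (fun _ : ℝ => ((0:ℝ), (0:ℝ))) L := by
      simp [hf_def, hρL, h0]
    have heq := ODE_solution_unique_of_mem_Icc_left (fun t _ => hlip t) hcontf hf' (fun _ _ => trivial)
      continuousOn_const hg' (fun _ _ => trivial) heqL
    have := heq (Set.left_mem_Icc.2 hL.le)
    simp only [hf_def, Prod.mk.injEq] at this
    linarith [this.2]
  have hρ'L : ρ' L < 0 := lt_of_le_of_ne hρ'Lle hρ'Lne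
  -- apply the auxiliary construction
  obtain ⟨Hp, hHp0, hHpL, hHpcont, hHpd, hHpmid₁, hHpmid₂, hHpmid₃⟩ :=
    geodesic_aux_H L hL ρ ρ' ρ'' hρd hρ'd hρpos hρ0 hρL hρ'0 hρ'L ωp b hωp
  obtain ⟨Hm, hHm0, hHmL, hHmcont, hHmd, _, _, _⟩ :=
    geodesic_aux_H L hL ρ ρ' ρ'' hρd hρ'd hρpos hρ0 hρL hρ'0 hρ'L ωm (-b) hωm
  -- pointwise derivative bounds
  have habsU : ∀ t ∈ Set.Icc 0 L, |U t * ρ t * ρ' t| ≤ 2 * b * (ρ t * |ρ' t|) := by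
    intro t ht
    rw [abs_mul, abs_mul, abs_of_nonneg (hρnn t ht)]
    calc |U t| * ρ t * |ρ' t| ≤ 2 * b * ρ t * |ρ' t| :=
          mul_le_mul_of_nonneg_right
            (mul_le_mul_of_nonneg_right (hUb t ht) (hρnn t ht)) (abs_nonneg _)
      _ = 2 * b * (ρ t * |ρ' t|) := by ring
  have hdp_ge : ∀ t ∈ Set.Ioo 0 L,
      1 ≤ (ρ' t ^ 2 - ρ t * ρ'' t) / (ωp ^ 2 * ρ t ^ 2 + (|ρ' t| - b * ρ t) ^ 2) := by
    intro t ht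
    have htIcc : t ∈ Set.Icc 0 L := Set.mem_Icc_of_Ioo ht
    have hρt := hρpos t ht
    have hden : 0 < ωp ^ 2 * ρ t ^ 2 + (|ρ' t| - b * ρ t) ^ 2 := by
      have h1 : 0 < ωp ^ 2 * ρ t ^ 2 := mul_pos (pow_pos hωp 2) (pow_pos hρt 2)
      linarith [sq_nonneg (|ρ' t| - b * ρ t)]
    rw [le_div_iff₀ hden, one_mul]
    have hUbd := habsU t htIcc
    have hU1 : -(2 * b * (ρ t * |ρ' t|)) ≤ U t * ρ t * ρ' t := by
      linarith [neg_abs_le (U t * ρ t * ρ' t)]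
    exact geo_arith_up b cp ωp (U t) (V t) (ρ t) (ρ' t) (ρ'' t) hωp2 hρt.le hU1
      (hVb t htIcc).1 (hode t htIcc)
  have hdm_le : ∀ t ∈ Set.Ioo 0 L,
      (ρ' t ^ 2 - ρ t * ρ'' t) / (ωm ^ 2 * ρ t ^ 2 + (|ρ' t| - (-b) * ρ t) ^ 2) ≤ 1 := by
    intro t ht
    have htIcc : t ∈ Set.Icc 0 L := Set.mem_Icc_of_Ioo ht
    have hρt := hρpos t ht
    have hden : 0 < ωm ^ 2 * ρ t ^ 2 + (|ρ' t| - (-b) * ρ t) ^ 2 := by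
      have h1 : 0 < ωm ^ 2 * ρ t ^ 2 := mul_pos (pow_pos hωm 2) (pow_pos hρt 2)
      linarith [sq_nonneg (|ρ' t| - (-b) * ρ t)]
    rw [div_le_one hden]
    have hUbd := habsU t htIcc
    have hU2 : U t * ρ t * ρ' t ≤ 2 * b * (ρ t * |ρ' t|) := by
      linarith [le_abs_self (U t * ρ t * ρ' t)]
    exact geo_arith_low b cm ωm (U t) (V t) (ρ t) (ρ' t) (ρ'' t) hωm2 hρt.le hU2
      (hVb t htIcc).2 (hode t htIcc)
  -- upper bound : L ≤ Tp
  have hmono : MonotoneOn (fun t => Hp t - t) (Set.Icc 0 L) := by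
    apply monotoneOn_of_deriv_nonneg (convex_Icc 0 L) (hHpcont.sub continuousOn_id)
    · intro t ht
      rw [interior_Icc] at ht
      exact ((hHpd t ht).sub (hasDerivAt_id t)).differentiableAt.differentiableWithinAt
    · intro t ht
      rw [interior_Icc] at ht
      rw [((hHpd t ht).sub (hasDerivAt_id t)).deriv]
      have := hdp_ge t ht
      linarith
  have hLTp : L ≤ Tp := by
    have h1 : Hp 0 - 0 ≤ Hp L - L :=
      hmono (Set.left_mem_Icc.2 hL.le) (Set.right_mem_Icc.2 hL.le) hL.le
    rw [hHp0, hHpL] at h1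
    rw [hTp_def, hWpeq]
    have h2 : 2 * (π / 2 + β) / ωp = (π + 2 * Real.arctan (b / ωp)) / ωp := by
      rw [hβ_def]
      ring_nf
    rw [h2]
    linarith
  -- lower bound : Tm ≤ L
  have hanti : AntitoneOn (fun t => Hm t - t) (Set.Icc 0 L) := by
    apply antitoneOn_of_deriv_nonpos (convex_Icc 0 L) (hHmcont.sub continuousOn_id)
    · intro t ht
      rw [interior_Icc] at ht
      exact ((hHmd t ht).sub (hasDerivAt_id t)).differentiableAt.differentiableWithinAt
    · intro t ht
      rw [interior_Icc] at ht
      rw [((hHmd t ht).sub (hasDerivAt_id t)).deriv]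
      have := hdm_le t ht
      linarith
  have hTmL : 2 * Wm / ωm ≤ L := by
    have h1 : Hm L - L ≤ Hm 0 - 0 :=
      hanti (Set.left_mem_Icc.2 hL.le) (Set.right_mem_Icc.2 hL.le) hL.le
    rw [hHm0, hHmL] at h1
    rw [hWmeq]
    have h3 : π + 2 * Real.arctan (-b / ωm) = π - 2 * γ := by
      rw [hγ_def, show -b / ωm = -(b / ωm) by ring, Real.arctan_neg]
      ring
    rw [h3] at h1
    have h2 : 2 * (π / 2 - γ) / ωm = (π - 2 * γ) / ωm := by ring_nf
    rw [h2]
    linarith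
  refine ⟨hTmL, hLTp, ?_⟩
  -- now the uniform bound
  set S : Set ℝ := Set.Icc 0 L ∩ ρ' ⁻¹' (Set.Iic 0) with hS_def
  have hSL : L ∈ S := ⟨Set.right_mem_Icc.2 hL.le, by simpa using hρ'L.le⟩
  have hSbdd : BddBelow S := ⟨0, fun x hx => hx.1.1⟩
  have hSclosed : IsClosed S :=
    hρ'cont.preimage_isClosed_of_isClosed isClosed_Icc isClosed_Iic
  set m := sInf S with hm_def
  have hmS : m ∈ S := hSclosed.csInf_mem ⟨L, hSL⟩ hSbdd
  have hmIcc : m ∈ Set.Icc 0 L := hmS.1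
  have hρ'mle : ρ' m ≤ 0 := hmS.2
  have hm0 : 0 < m := by
    rcases eq_or_lt_of_le hmIcc.1 with h | h
    · exfalso
      rw [← h] at hρ'mle
      linarith
    · exact h
  have hmL : m ≤ L := hmIcc.2
  have hρ'pos_lt : ∀ t, 0 ≤ t → t < m → 0 < ρ' t := by
    intro t ht0 htm
    by_contra hc
    push_neg at hc
    have : t ∈ S := ⟨⟨ht0, le_trans htm.le hmL⟩, hc⟩
    exact absurd (csInf_le hSbdd this) (not_le.2 htm)
  have hρ'm0 : ρ' m = 0 := by
    refine le_antisymm hρ'mle ?_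
    have htend : Tendsto ρ' (𝓝[Set.Ioo 0 m] m) (𝓝 (ρ' m)) :=
      (hρ'cont m hmIcc).mono_left (nhdsWithin_mono _
        (fun s hs => ⟨hs.1.le, le_trans hs.2.le hmL⟩))
    have hne : (𝓝[Set.Ioo 0 m] m).NeBot := by
      rw [nhdsWithin_Ioo_eq_nhdsLT hm0]
      infer_instance
    refine ge_of_tendsto htend ?_
    filter_upwards [self_mem_nhdsWithin] with s hs
    exact (hρ'pos_lt s hs.1.le hs.2).le
  have hmltL : m < L := by
    rcases eq_or_lt_of_le hmL with h | h
    · exfalso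
      rw [h] at hρ'm0
      linarith
    · exact h
  -- sign of ρ' after m, via strict monotonicity of Hp
  have hstrict : StrictMonoOn Hp (Set.Icc 0 L) := by
    apply strictMonoOn_of_deriv_pos (convex_Icc 0 L) hHpcont
    intro t ht
    rw [interior_Icc] at ht
    rw [(hHpd t ht).deriv]
    linarith [hdp_ge t ht]
  have hsign : ∀ t, m < t → t < L → ρ' t < 0 := by
    intro t hmt htL
    by_contra hc
    push_neg at hc
    have htIoo : t ∈ Set.Ioo 0 L := ⟨lt_trans hm0 hmt, htL⟩
    have h1 : Hp t ≤ (π / 2 + Real.arctan (b / ωp)) / ωp := hHpmid₁ t htIoo hc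
    have h2 : Hp m = (π / 2 + Real.arctan (b / ωp)) / ωp := hHpmid₃ m ⟨hm0, hmltL⟩ hρ'm0
    have h3 := hstrict ⟨hm0.le, hmL⟩ ⟨(lt_trans hm0 hmt).le, htL.le⟩ hmt
    rw [h2] at h3
    linarith
  -- ρ is antitone on [m, L]
  have hanti2 : AntitoneOn ρ (Set.Icc m L) := by
    apply antitoneOn_of_deriv_nonpos (convex_Icc m L)
      (hρcont.mono (Set.Icc_subset_Icc hm0.le le_rfl))
    · intro t ht
      rw [interior_Icc] at ht
      have htIoo : t ∈ Set.Ioo 0 L := ⟨lt_trans hm0 ht.1, ht.2⟩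
      exact ((hρd t (Set.mem_Icc_of_Ioo htIoo)).hasDerivAt
        (Icc_mem_nhds htIoo.1 htIoo.2)).differentiableAt.differentiableWithinAt
    · intro t ht
      rw [interior_Icc] at ht
      have htIoo : t ∈ Set.Ioo 0 L := ⟨lt_trans hm0 ht.1, ht.2⟩
      rw [((hρd t (Set.mem_Icc_of_Ioo htIoo)).hasDerivAt
        (Icc_mem_nhds htIoo.1 htIoo.2)).deriv]
      exact (hsign t ht.1 ht.2).le
  -- energy estimate on [0, m]
  set E : ℝ → ℝ := fun t => Real.exp (-(4 * b * t)) * (cp ^ 2 * ρ t ^ 2 + ρ' t ^ 2)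
    with hE_def
  have hEderiv : ∀ t ∈ Set.Ioo 0 m, HasDerivAt E
      (Real.exp (-(4 * b * t)) * -(4 * b) * (cp ^ 2 * ρ t ^ 2 + ρ' t ^ 2)
        + Real.exp (-(4 * b * t)) * (cp ^ 2 * (2 * ρ t * ρ' t) + 2 * ρ' t * ρ'' t)) t := by
    intro t ht
    have htIoo : t ∈ Set.Ioo 0 L := ⟨ht.1, lt_trans ht.2 hmltL⟩
    have hρat : HasDerivAt ρ (ρ' t) t :=
      (hρd t (Set.mem_Icc_of_Ioo htIoo)).hasDerivAt (Icc_mem_nhds htIoo.1 htIoo.2)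
    have hρ'at : HasDerivAt ρ' (ρ'' t) t :=
      (hρ'd t (Set.mem_Icc_of_Ioo htIoo)).hasDerivAt (Icc_mem_nhds htIoo.1 htIoo.2)
    have h1 : HasDerivAt (fun s => ρ s ^ 2) (2 * ρ t * ρ' t) t := by
      have h := hρat.pow 2
      norm_num at h
      exact h
    have h2 : HasDerivAt (fun s => ρ' s ^ 2) (2 * ρ' t * ρ'' t) t := by
      have h := hρ'at.pow 2
      norm_num at h
      exact h
    have hE' : HasDerivAt (fun s => cp ^ 2 * ρ s ^ 2 + ρ' s ^ 2)
        (cp ^ 2 * (2 * ρ t * ρ' t) + 2 * ρ' t * ρ'' t) t := (h1.const_mul (cp ^ 2)).add h2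
    have hexpin : HasDerivAt (fun s : ℝ => -(4 * b * s)) (-(4 * b)) t := by
      have h := ((hasDerivAt_id t).const_mul (4 * b)).neg
      norm_num at h
      exact h
    have hexp : HasDerivAt (fun s => Real.exp (-(4 * b * s)))
        (Real.exp (-(4 * b * t)) * -(4 * b)) t := hexpin.exp
    have hEd := hexp.mul hE'
    rw [hE_def]
    exact hEd
  have hEanti : AntitoneOn E (Set.Icc 0 m) := by
    have hsub : Set.Icc (0:ℝ) m ⊆ Set.Icc 0 L := Set.Icc_subset_Icc le_rfl hmL
    apply antitoneOn_of_deriv_nonpos (convex_Icc 0 m)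
    · rw [hE_def]
      apply ContinuousOn.mul
      · exact (Real.continuous_exp.comp ((continuous_const.mul continuous_id).neg)).continuousOn
      · exact (((hρcont.mono hsub).pow 2).const_smul (cp ^ 2)).add ((hρ'cont.mono hsub).pow 2)
    · intro t ht
      rw [interior_Icc] at ht
      exact (hEderiv t ht).differentiableAt.differentiableWithinAt
    · intro t ht
      rw [interior_Icc] at ht
      rw [(hEderiv t ht).deriv]
      have htIoo : t ∈ Set.Ioo 0 L := ⟨ht.1, lt_trans ht.2 hmltL⟩
      have hρt := hρpos t htIoo
      have hρ't := hρ'pos_lt t ht.1.le ht.2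
      have htIcc := Set.mem_Icc_of_Ioo htIoo
      have hodet := hode t htIcc
      have hUbd := hUb t htIcc
      have hVbd := (hVb t htIcc).1
      have hexppos := Real.exp_pos (-(4 * b * t))
      have hbr : -(4 * b) * (cp ^ 2 * ρ t ^ 2 + ρ' t ^ 2)
          + (cp ^ 2 * (2 * ρ t * ρ' t) + 2 * ρ' t * ρ'' t) ≤ 0 := by
        have := geo_arith_energy b cp (U t) (V t) (ρ t) (ρ' t) (ρ'' t) hb hρt.le hρ't.le
          hcp.le hUbd hVbd hodet
        linarith
      calc Real.exp (-(4 * b * t)) * -(4 * b) * (cp ^ 2 * ρ t ^ 2 + ρ' t ^ 2)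
          + Real.exp (-(4 * b * t)) * (cp ^ 2 * (2 * ρ t * ρ' t) + 2 * ρ' t * ρ'' t)
          = Real.exp (-(4 * b * t)) * (-(4 * b) * (cp ^ 2 * ρ t ^ 2 + ρ' t ^ 2)
            + (cp ^ 2 * (2 * ρ t * ρ' t) + 2 * ρ' t * ρ'' t)) := by ring
        _ ≤ 0 := mul_nonpos_of_nonneg_of_nonpos hexppos.le hbr
  -- conclude the pointwise bound
  have hboundm : ∀ τ ∈ Set.Icc 0 m, ρ τ ≤ Real.exp (2 * b * Tp) / cp * ρ' 0 := by
    intro τ hτ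
    have h1 : E τ ≤ E 0 := hEanti (Set.left_mem_Icc.2 hm0.le) hτ hτ.1
    have hE0 : E 0 = ρ' 0 ^ 2 := by
      simp [hE_def, hρ0]
    rw [hE0] at h1
    have hepos := Real.exp_pos (4 * b * τ)
    have h2 : cp ^ 2 * ρ τ ^ 2 + ρ' τ ^ 2 ≤ Real.exp (4 * b * τ) * ρ' 0 ^ 2 := by
      have h3 : Real.exp (-(4 * b * τ)) = (Real.exp (4 * b * τ))⁻¹ := Real.exp_neg _
      rw [hE_def] at h1
      simp only at h1
      rw [h3, inv_mul_le_iff₀ hepos] at h1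
      exact h1
    have hexple : Real.exp (4 * b * τ) ≤ Real.exp (4 * b * Tp) := by
      apply Real.exp_le_exp.2
      have hτTp : τ ≤ Tp := le_trans hτ.2 (le_trans hmL hLTp)
      have h4b : (0:ℝ) ≤ 4 * b := by linarith
      have := mul_le_mul_of_nonneg_left hτTp h4b
      linarith
    have hexp2 : Real.exp (2 * b * Tp) * Real.exp (2 * b * Tp) = Real.exp (4 * b * Tp) := by
      rw [← Real.exp_add]
      ring_nf
    have hρτnn : 0 ≤ ρ τ := hρnn τ ⟨hτ.1, le_trans hτ.2 hmL⟩
    have hkey : cp * ρ τ ≤ Real.exp (2 * b * Tp) * ρ' 0 := by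
      apply geo_arith_sq _ _ (mul_nonneg hcp.le hρτnn)
        (mul_nonneg (Real.exp_pos _).le hρ'0.le)
      have h5 : Real.exp (4 * b * τ) * ρ' 0 ^ 2 ≤ Real.exp (4 * b * Tp) * ρ' 0 ^ 2 :=
        mul_le_mul_of_nonneg_right hexple (sq_nonneg _)
      have h6 : (Real.exp (2 * b * Tp) * ρ' 0) ^ 2 = Real.exp (4 * b * Tp) * ρ' 0 ^ 2 := by
        rw [mul_pow]
        congr 1
        rw [sq, ← Real.exp_add]
        congr 1
        ring
      have h7 : (cp * ρ τ) ^ 2 = cp ^ 2 * ρ τ ^ 2 := by ring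
      rw [h6, h7]
      linarith [sq_nonneg (ρ' τ)]
    rw [div_mul_eq_mul_div, le_div_iff₀ hcp]
    linarith [hkey]
  intro τ hτ
  rcases le_total τ m with h | h
  · exact hboundm τ ⟨hτ.1, h⟩
  · have h1 : ρ τ ≤ ρ m := hanti2 (Set.left_mem_Icc.2 hmL) ⟨h, hτ.2⟩ h
    have h2 := hboundm m (Set.right_mem_Icc.2 hm0.le)
    linarith
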